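/- Purity decay rate vanishes only for vanishing dissipator: let L_1, …, L_r be n×n complex matrices with trace(L_i) = 0 for all i, and let D be the dissipator D(ρ) = Σ_i (L_i ρ L_i† − ½ L_i† L_i ρ − ½ ρ L_i† L_i). Define Γ = sup { −2·Re(trace(ρ·D(ρ))) : ρ a density matrix }. Then Γ ≥ 0, and Γ = 0 if and only if L_i = 0 for all i (equivalently, D = 0). -/

import Mathlib

open Finset
open scoped Matrix ComplexOrder

noncomputable section

namespace PurityAux
variable {n : ℕ}

def pure' (ψ : Fin n → ℂ) : Matrix (Fin n) (Fin n) ℂ := Matrix.vecMulVec ψ (star ψ)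

lemma pure_mulVec (ψ v : Fin n → ℂ) : pure' ψ *ᵥ v = (star ψ ⬝ᵥ v) • ψ := by
  funext a
  simp only [pure', Matrix.mulVec, dotProduct, Matrix.vecMulVec_apply, Pi.star_apply,
    Pi.smul_apply, smul_eq_mul, Finset.sum_mul]
  exact Finset.sum_congr rfl fun k _ => by ring

lemma trace_pure_mul (ψ : Fin n → ℂ) (M : Matrix (Fin n) (Fin n) ℂ) :
    (pure' ψ * M).trace = star ψ ⬝ᵥ (M *ᵥ ψ) := by
  simp only [Matrix.trace, Matrix.diag, Matrix.mul_apply, pure', Matrix.vecMulVec_apply,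
    dotProduct, Matrix.mulVec, Pi.star_apply]
  rw [Finset.sum_comm]
  refine Finset.sum_congr rfl fun k _ => ?_
  rw [Finset.mul_sum]
  exact Finset.sum_congr rfl fun j _ => by ring

lemma dot_star_self (v : Fin n → ℂ) :
    star v ⬝ᵥ v = ((∑ k, Complex.normSq (v k) : ℝ) : ℂ) := by
  simp only [dotProduct, Pi.star_apply]
  push_cast
  exact Finset.sum_congr rfl fun k _ => by
    rw [Complex.normSq_eq_conj_mul_self]; rfl

lemma pure_posSemidef (ψ : Fin n → ℂ) : (pure' ψ).PosSemidef := by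
  refine Matrix.posSemidef_iff_dotProduct_mulVec.mpr ⟨?_, ?_⟩
  · ext j k
    simp [pure', Matrix.conjTranspose_apply, Matrix.vecMulVec_apply, mul_comm]
  · intro x
    rw [pure_mulVec, dotProduct_smul]
    have : star x ⬝ᵥ ψ = star (star ψ ⬝ᵥ x) := by
      rw [← Matrix.star_dotProduct_star]; simp
    rw [smul_eq_mul, this]
    exact mul_star_self_nonneg ((star ψ ⬝ᵥ x : ℂ))

lemma pure_trace (ψ : Fin n → ℂ) : (pure' ψ).trace = star ψ ⬝ᵥ ψ := by
  simp only [Matrix.trace, Matrix.diag, pure', Matrix.vecMulVec_apply, dotProduct,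
    Pi.star_apply]
  exact Finset.sum_congr rfl fun k _ => mul_comm _ _

end PurityAux

namespace PurityAux
variable {n : ℕ}

lemma star_dot_comm (u v : Fin n → ℂ) : star u ⬝ᵥ v = star (star v ⬝ᵥ u) :=
  Matrix.star_dotProduct u v

lemma cs_expand (ψ v : Fin n → ℂ) (hψ : star ψ ⬝ᵥ ψ = 1) :
    star (v - (star ψ ⬝ᵥ v) • ψ) ⬝ᵥ (v - (star ψ ⬝ᵥ v) • ψ)
      = star v ⬝ᵥ v - (star ψ ⬝ᵥ v) * star (star ψ ⬝ᵥ v) := by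
  set c : ℂ := star ψ ⬝ᵥ v with hc
  have h1 : star v ⬝ᵥ ψ = star c := Matrix.star_dotProduct v ψ
  rw [star_sub, sub_dotProduct, dotProduct_sub, dotProduct_sub,
    star_smul, smul_dotProduct, smul_dotProduct,
    dotProduct_smul, dotProduct_smul, ← hc, h1, hψ]
  push_cast
  simp only [smul_eq_mul, star_star]
  ring
end PurityAux

namespace PurityAux
variable {n : ℕ}

lemma star_dot_mulVec_conjT (ψ : Fin n → ℂ) (A : Matrix (Fin n) (Fin n) ℂ) (u : Fin n → ℂ) :
    star ψ ⬝ᵥ (Aᴴ *ᵥ u) = star (A *ᵥ ψ) ⬝ᵥ u := by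
  rw [Matrix.dotProduct_mulVec, Matrix.star_mulVec]

lemma trace_pure_term (ψ : Fin n → ℂ) (hψ : star ψ ⬝ᵥ ψ = 1) (A : Matrix (Fin n) (Fin n) ℂ) :
    (pure' ψ * (A * pure' ψ * Aᴴ - (2:ℂ)⁻¹ • (Aᴴ * A * pure' ψ)
      - (2:ℂ)⁻¹ • (pure' ψ * (Aᴴ * A)))).trace
      = (star ψ ⬝ᵥ (A *ᵥ ψ)) * star (star ψ ⬝ᵥ (A *ᵥ ψ)) - star (A *ᵥ ψ) ⬝ᵥ (A *ᵥ ψ) := by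
  set u : Fin n → ℂ := A *ᵥ ψ with hu
  set c : ℂ := star ψ ⬝ᵥ u with hc
  rw [mul_sub, mul_sub, Matrix.trace_sub, Matrix.trace_sub, Matrix.mul_smul, Matrix.mul_smul,
    Matrix.trace_smul, Matrix.trace_smul, trace_pure_mul, trace_pure_mul, trace_pure_mul]
  have hpure_psi : pure' ψ *ᵥ ψ = ψ := by rw [pure_mulVec, hψ, one_smul]
  have h1 : (A * pure' ψ * Aᴴ) *ᵥ ψ = star c • u := by
    rw [← Matrix.mulVec_mulVec, ← Matrix.mulVec_mulVec, pure_mulVec,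
      star_dot_mulVec_conjT, ← hu, Matrix.star_dotProduct, ← hc, Matrix.mulVec_smul]
  have h2 : (Aᴴ * A * pure' ψ) *ᵥ ψ = Aᴴ *ᵥ u := by
    rw [← Matrix.mulVec_mulVec, hpure_psi, Matrix.mulVec_mulVec]
  have h3 : (pure' ψ * (Aᴴ * A)) *ᵥ ψ = (star u ⬝ᵥ u) • ψ := by
    rw [← Matrix.mulVec_mulVec, pure_mulVec, ← Matrix.mulVec_mulVec, star_dot_mulVec_conjT]
  rw [h1, h2, h3, dotProduct_smul, dotProduct_smul, ← hc,
    star_dot_mulVec_conjT, hψ]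
  simp only [smul_eq_mul, mul_one]
  ring
end PurityAux

namespace PurityAux
variable {n : ℕ}

def sAbs (M : Matrix (Fin n) (Fin n) ℂ) : ℝ := ∑ j, ∑ k, norm (M j k)

lemma sAbs_nonneg (M : Matrix (Fin n) (Fin n) ℂ) : 0 ≤ sAbs M :=
  Finset.sum_nonneg fun _ _ => Finset.sum_nonneg fun _ _ => norm_nonneg _

lemma abs_trace_le (M : Matrix (Fin n) (Fin n) ℂ) : norm M.trace ≤ sAbs M := by
  refine (norm_sum_le _ _).trans ?_
  refine Finset.sum_le_sum fun j _ => ?_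
  exact Finset.single_le_sum (f := fun k => norm (M j k))
    (fun k _ => norm_nonneg _) (Finset.mem_univ j)

lemma sAbs_mul_le (M N : Matrix (Fin n) (Fin n) ℂ) : sAbs (M * N) ≤ sAbs M * sAbs N := by
  have h1 : sAbs (M * N) ≤ ∑ j, ∑ a, norm (M j a) * sAbs N := by
    unfold sAbs
    refine Finset.sum_le_sum fun j _ => ?_
    calc ∑ k, norm ((M * N) j k)
        ≤ ∑ k, ∑ a, norm (M j a) * norm (N a k) := by
          refine Finset.sum_le_sum fun k _ => ?_
          rw [Matrix.mul_apply]
          refine (norm_sum_le _ _).trans ?_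
          exact Finset.sum_le_sum fun a _ => (norm_mul _ _).le
      _ = ∑ a, ∑ k, norm (M j a) * norm (N a k) := Finset.sum_comm
      _ ≤ ∑ a, norm (M j a) * sAbs N := by
          refine Finset.sum_le_sum fun a _ => ?_
          rw [← Finset.mul_sum]
          refine mul_le_mul_of_nonneg_left ?_ (norm_nonneg _)
          exact Finset.single_le_sum (f := fun b => ∑ k, norm ((N : Matrix _ _ ℂ) b k))
            (fun b _ => Finset.sum_nonneg fun _ _ => norm_nonneg _) (Finset.mem_univ a)
  calc sAbs (M * N) ≤ ∑ j, ∑ a, norm (M j a) * sAbs N := h1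
    _ = sAbs M * sAbs N := by
        rw [sAbs, sAbs, Finset.sum_mul]
        exact Finset.sum_congr rfl fun j _ => (Finset.sum_mul _ _ _).symm

lemma sAbs_conjTranspose (M : Matrix (Fin n) (Fin n) ℂ) : sAbs Mᴴ = sAbs M := by
  unfold sAbs
  rw [Finset.sum_comm]
  simp [Matrix.conjTranspose_apply]

lemma sAbs_smul_half (M : Matrix (Fin n) (Fin n) ℂ) : sAbs ((2:ℂ)⁻¹ • M) ≤ sAbs M := by
  unfold sAbs
  refine Finset.sum_le_sum fun j _ => Finset.sum_le_sum fun k _ => ?_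
  simp only [Matrix.smul_apply, smul_eq_mul, norm_mul]
  have h2 : norm ((2:ℂ)⁻¹) = 2⁻¹ := by
    rw [norm_inv]; norm_num
  rw [h2]
  nlinarith [norm_nonneg (M j k)]
end PurityAux

namespace PurityAux
variable {n : ℕ}

lemma psd_quad_form (hρ : (ρ : Matrix (Fin n) (Fin n) ℂ).PosSemidef) (x : Fin n → ℂ) :
    0 ≤ (star x ⬝ᵥ ρ *ᵥ x).re ∧ (star x ⬝ᵥ ρ *ᵥ x).im = 0 := by
  have h := hρ.dotProduct_mulVec_nonneg x
  rw [Complex.nonneg_iff] at h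
  exact ⟨h.1, h.2.symm⟩

lemma single_quad (ρ : Matrix (Fin n) (Fin n) ℂ) (j : Fin n) :
    star (Pi.single j 1 : Fin n → ℂ) ⬝ᵥ ρ *ᵥ (Pi.single j 1 : Fin n → ℂ) = ρ j j := by
  have hs : star (Pi.single j 1 : Fin n → ℂ) = Pi.single j 1 := by
    ext a
    by_cases h : a = j <;> simp [h, Pi.single_apply]
  rw [hs, Matrix.mulVec_single, single_dotProduct]
  simp

lemma diag_re_nonneg (hρ : (ρ : Matrix (Fin n) (Fin n) ℂ).PosSemidef) (j : Fin n) :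
    0 ≤ (ρ j j).re ∧ (ρ j j).im = 0 := by
  have := psd_quad_form hρ (Pi.single j 1 : Fin n → ℂ)
  rwa [single_quad] at this

lemma diag_re_le_one (hρ : (ρ : Matrix (Fin n) (Fin n) ℂ).PosSemidef)
    (htr : ρ.trace = 1) (j : Fin n) : (ρ j j).re ≤ 1 := by
  have h1 : ∑ k, (ρ k k).re = 1 := by
    have : (ρ.trace).re = 1 := by rw [htr]; simp
    rw [Matrix.trace] at this
    rw [← this, Complex.re_sum]
    rfl
  calc (ρ j j).re ≤ ∑ k, (ρ k k).re :=
        Finset.single_le_sum (fun k _ => (diag_re_nonneg hρ k).1) (Finset.mem_univ j)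
    _ = 1 := h1
end PurityAux

namespace PurityAux
variable {n : ℕ}

lemma star_single (m : Fin n) (y : ℂ) :
    star (Pi.single m y : Fin n → ℂ) = Pi.single m (star y) := by
  ext a
  by_cases h : a = m <;> simp [h, Pi.single_apply]

lemma entry_abs_le_one {ρ : Matrix (Fin n) (Fin n) ℂ} (hρ : ρ.PosSemidef)
    (htr : ρ.trace = 1) (j k : Fin n) : norm (ρ j k) ≤ 1 := by
  rcases eq_or_ne j k with rfl | hjk
  · have h := diag_re_nonneg hρ j
    have h2 := diag_re_le_one hρ htr j
    have : ρ j j = ((ρ j j).re : ℂ) := Complex.ext rfl (by simp [h.2])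
    rw [this, Complex.norm_real, Real.norm_eq_abs, abs_of_nonneg h.1]
    exact h2
  rcases eq_or_ne (ρ j k) 0 with h0 | h0
  · simp [h0]
  set t : ℂ := ρ j k with ht
  set a : ℝ := norm t with haa
  have ha : 0 < a := norm_pos_iff.mpr h0
  have ha' : (a:ℂ) ≠ 0 := by exact_mod_cast ha.ne'
  set c : ℂ := -(star t) / (a:ℂ) with hc
  set x : Fin n → ℂ := Pi.single j 1 + Pi.single k c with hx
  have hherm : ρ k j = star t := by
    have := congrFun (congrFun hρ.1 k) j
    rw [Matrix.conjTranspose_apply] at this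
    rw [← this]
  have hts : t * (starRingEnd ℂ) t = (a:ℂ) * (a:ℂ) := by
    rw [Complex.mul_conj, haa]
    push_cast
    rw [← Complex.sq_norm]
    push_cast
    ring
  have hsc : star c = -t / (a:ℂ) := by
    rw [hc]
    simp [star_div₀, Complex.star_def, Complex.conj_ofReal]
  have hq : star x ⬝ᵥ ρ *ᵥ x = ρ j j + ρ k k - 2*(a:ℂ) := by
    rw [hx, star_add, star_single, star_single, Matrix.mulVec_add,
      Matrix.mulVec_single, Matrix.mulVec_single, add_dotProduct,
      single_dotProduct, single_dotProduct]
    simp only [Pi.add_apply, star_one, Pi.smul_apply, op_smul_eq_mul, Matrix.col_apply]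
    rw [hherm, ← ht]
    have e1 : t * c = -(a:ℂ) := by
      rw [hc]; simp only [Complex.star_def]; field_simp; linear_combination -hts
    have e2 : star c * star t = -(a:ℂ) := by
      rw [hsc]; simp only [Complex.star_def]; field_simp; linear_combination -hts
    have e3 : star c * c = 1 := by
      rw [hsc, hc]; simp only [Complex.star_def]; field_simp; linear_combination hts
    linear_combination e1 + e2 + ρ k k * e3
  have hre := (psd_quad_form hρ x).1
  rw [hq] at hre
  simp only [Complex.sub_re, Complex.add_re, Complex.mul_re] at hre
  have d1 := diag_re_le_one hρ htr j
  have d2 := diag_re_le_one hρ htr k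
  norm_num at hre
  linarith

lemma sAbs_density_le {ρ : Matrix (Fin n) (Fin n) ℂ} (hρ : ρ.PosSemidef)
    (htr : ρ.trace = 1) : sAbs ρ ≤ (n:ℝ)^2 := by
  unfold sAbs
  calc ∑ j, ∑ k, norm (ρ j k) ≤ ∑ j : Fin n, ∑ k : Fin n, (1:ℝ) :=
        Finset.sum_le_sum fun j _ => Finset.sum_le_sum fun k _ => entry_abs_le_one hρ htr j k
    _ = (n:ℝ)^2 := by simp [sq]

end PurityAux

namespace PurityAux
variable {n : ℕ}

lemma sAbs_sub_le (M N : Matrix (Fin n) (Fin n) ℂ) : sAbs (M - N) ≤ sAbs M + sAbs N := by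
  unfold sAbs
  rw [← Finset.sum_add_distrib]
  refine Finset.sum_le_sum fun j _ => ?_
  rw [← Finset.sum_add_distrib]
  refine Finset.sum_le_sum fun k _ => ?_
  calc norm ((M - N) j k) = norm (M j k - N j k) := by rw [Matrix.sub_apply]
    _ ≤ norm (M j k) + norm (N j k) := by
        simpa [sub_eq_add_neg] using norm_add_le (M j k) (-(N j k))

lemma sAbs_sum_le {r : ℕ} (f : Fin r → Matrix (Fin n) (Fin n) ℂ) :
    sAbs (∑ i, f i) ≤ ∑ i, sAbs (f i) := by
  unfold sAbs
  calc ∑ j, ∑ k, norm ((∑ i, f i) j k)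
      ≤ ∑ j, ∑ k, ∑ i, norm (f i j k) := by
        refine Finset.sum_le_sum fun j _ => Finset.sum_le_sum fun k _ => ?_
        have h : (∑ i, f i) j k = ∑ i, f i j k := by
          rw [Matrix.sum_apply]
        rw [h]
        exact norm_sum_le Finset.univ (fun i => f i j k)
    _ = ∑ i, ∑ j, ∑ k, norm (f i j k) := by
        rw [show (∑ j, ∑ k, ∑ i, norm (f i j k))
            = ∑ j, ∑ i, ∑ k, norm (f i j k) from
          Finset.sum_congr rfl fun j _ => Finset.sum_comm]
        exact Finset.sum_comm
end PurityAux

namespace PurityAux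
variable {n : ℕ}

lemma summand_eq (A : Matrix (Fin n) (Fin n) ℂ) (ψ : Fin n → ℂ) (hψ : star ψ ⬝ᵥ ψ = 1) :
    (∑ k, Complex.normSq ((A *ᵥ ψ - (star ψ ⬝ᵥ (A *ᵥ ψ)) • ψ) k))
      = (star (A *ᵥ ψ) ⬝ᵥ (A *ᵥ ψ)).re - Complex.normSq (star ψ ⬝ᵥ (A *ᵥ ψ)) := by
  set v : Fin n → ℂ := A *ᵥ ψ with hv
  set c : ℂ := star ψ ⬝ᵥ v with hc
  have h1 := cs_expand ψ v hψ
  have h2 := dot_star_self (v - c • ψ)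
  rw [h2] at h1
  have h3 : ((∑ k, Complex.normSq ((v - c • ψ) k) : ℝ) : ℂ).re
      = (star v ⬝ᵥ v - c * star c).re := by rw [h1]
  rw [Complex.ofReal_re, Complex.sub_re] at h3
  have h4 : (c * star c).re = Complex.normSq c := by
    rw [Complex.star_def, Complex.mul_conj, Complex.ofReal_re]
  rw [h4] at h3
  exact h3

lemma summand_nonneg (A : Matrix (Fin n) (Fin n) ℂ) (ψ : Fin n → ℂ) (hψ : star ψ ⬝ᵥ ψ = 1) :
    0 ≤ (star (A *ᵥ ψ) ⬝ᵥ (A *ᵥ ψ)).re - Complex.normSq (star ψ ⬝ᵥ (A *ᵥ ψ)) := by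
  rw [← summand_eq A ψ hψ]
  exact Finset.sum_nonneg fun k _ => Complex.normSq_nonneg _

lemma summand_zero_eigen (A : Matrix (Fin n) (Fin n) ℂ) (ψ : Fin n → ℂ)
    (hψ : star ψ ⬝ᵥ ψ = 1)
    (h0 : (star (A *ᵥ ψ) ⬝ᵥ (A *ᵥ ψ)).re - Complex.normSq (star ψ ⬝ᵥ (A *ᵥ ψ)) = 0) :
    A *ᵥ ψ = (star ψ ⬝ᵥ (A *ᵥ ψ)) • ψ := by
  rw [← summand_eq A ψ hψ] at h0
  have h1 : ∀ k, Complex.normSq ((A *ᵥ ψ - (star ψ ⬝ᵥ (A *ᵥ ψ)) • ψ) k) = 0 := by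
    intro k
    have := (Finset.sum_eq_zero_iff_of_nonneg
      (fun k _ => Complex.normSq_nonneg ((A *ᵥ ψ - (star ψ ⬝ᵥ (A *ᵥ ψ)) • ψ) k))).mp h0
    exact this k (Finset.mem_univ k)
  have h2 : A *ᵥ ψ - (star ψ ⬝ᵥ (A *ᵥ ψ)) • ψ = 0 := by
    ext k
    exact Complex.normSq_eq_zero.mp (h1 k)
  rwa [sub_eq_zero] at h2

lemma mem_S {r : ℕ} (L : Fin r → Matrix (Fin n) (Fin n) ℂ)
    (D : Matrix (Fin n) (Fin n) ℂ → Matrix (Fin n) (Fin n) ℂ)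
    (hD : ∀ ρ, D ρ = ∑ i,
      (L i * ρ * (L i)ᴴ - (2 : ℂ)⁻¹ • ((L i)ᴴ * L i * ρ)
        - (2 : ℂ)⁻¹ • (ρ * ((L i)ᴴ * L i))))
    (ψ : Fin n → ℂ) (hψ : star ψ ⬝ᵥ ψ = 1) :
    (2 * ∑ i, ((star (L i *ᵥ ψ) ⬝ᵥ (L i *ᵥ ψ)).re
        - Complex.normSq (star ψ ⬝ᵥ (L i *ᵥ ψ)))) ∈
      {x : ℝ | ∃ ρ : Matrix (Fin n) (Fin n) ℂ,
        ρ.PosSemidef ∧ ρ.trace = 1 ∧ x = -2 * ((ρ * D ρ).trace).re} := by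
  refine ⟨pure' ψ, pure_posSemidef ψ, by rw [pure_trace, hψ], ?_⟩
  rw [hD, Finset.mul_sum, Finset.mul_sum, Matrix.trace_sum]
  have hterm : ∀ i : Fin r, (pure' ψ *
      (L i * pure' ψ * (L i)ᴴ - (2:ℂ)⁻¹ • ((L i)ᴴ * L i * pure' ψ)
        - (2:ℂ)⁻¹ • (pure' ψ * ((L i)ᴴ * L i)))).trace
      = (star ψ ⬝ᵥ (L i *ᵥ ψ)) * star (star ψ ⬝ᵥ (L i *ᵥ ψ))
          - star (L i *ᵥ ψ) ⬝ᵥ (L i *ᵥ ψ) :=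
    fun i => trace_pure_term ψ hψ (L i)
  rw [Finset.sum_congr rfl fun i _ => hterm i]
  rw [Complex.re_sum]
  have : ∀ i : Fin r, ((star ψ ⬝ᵥ (L i *ᵥ ψ)) * star (star ψ ⬝ᵥ (L i *ᵥ ψ))
      - star (L i *ᵥ ψ) ⬝ᵥ (L i *ᵥ ψ)).re
      = Complex.normSq (star ψ ⬝ᵥ (L i *ᵥ ψ)) - (star (L i *ᵥ ψ) ⬝ᵥ (L i *ᵥ ψ)).re := by
    intro i
    rw [Complex.sub_re, Complex.star_def, Complex.mul_conj, Complex.ofReal_re]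
  rw [Finset.sum_congr rfl fun i _ => this i, Finset.sum_sub_distrib,
    ← Finset.mul_sum, Finset.sum_sub_distrib]
  ring

end PurityAux

namespace PurityAux
variable {n : ℕ}

lemma sAbs_term_le (A ρ : Matrix (Fin n) (Fin n) ℂ) (hρR : sAbs ρ ≤ (n:ℝ)^2) :
    sAbs (A * ρ * Aᴴ - (2:ℂ)⁻¹ • (Aᴴ * A * ρ) - (2:ℂ)⁻¹ • (ρ * (Aᴴ * A)))
      ≤ 3 * ((n:ℝ)^2 * (sAbs A)^2) := by
  have hA := sAbs_nonneg A
  have hρ0 := sAbs_nonneg ρ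
  have m1 : sAbs (A * ρ * Aᴴ) ≤ sAbs A * sAbs ρ * sAbs A := by
    calc sAbs (A * ρ * Aᴴ) ≤ sAbs (A * ρ) * sAbs Aᴴ := sAbs_mul_le _ _
      _ = sAbs (A * ρ) * sAbs A := by rw [sAbs_conjTranspose]
      _ ≤ sAbs A * sAbs ρ * sAbs A :=
          mul_le_mul_of_nonneg_right (sAbs_mul_le _ _) hA
  have m2 : sAbs ((2:ℂ)⁻¹ • (Aᴴ * A * ρ)) ≤ sAbs A * sAbs A * sAbs ρ := by
    refine (sAbs_smul_half _).trans ?_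
    calc sAbs (Aᴴ * A * ρ) ≤ sAbs (Aᴴ * A) * sAbs ρ := sAbs_mul_le _ _
      _ ≤ (sAbs Aᴴ * sAbs A) * sAbs ρ :=
          mul_le_mul_of_nonneg_right (sAbs_mul_le _ _) hρ0
      _ = sAbs A * sAbs A * sAbs ρ := by rw [sAbs_conjTranspose]
  have m3 : sAbs ((2:ℂ)⁻¹ • (ρ * (Aᴴ * A))) ≤ sAbs ρ * (sAbs A * sAbs A) := by
    refine (sAbs_smul_half _).trans ?_
    calc sAbs (ρ * (Aᴴ * A)) ≤ sAbs ρ * sAbs (Aᴴ * A) := sAbs_mul_le _ _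
      _ ≤ sAbs ρ * (sAbs Aᴴ * sAbs A) :=
          mul_le_mul_of_nonneg_left (sAbs_mul_le _ _) hρ0
      _ = sAbs ρ * (sAbs A * sAbs A) := by rw [sAbs_conjTranspose]
  have msub : sAbs (A * ρ * Aᴴ - (2:ℂ)⁻¹ • (Aᴴ * A * ρ) - (2:ℂ)⁻¹ • (ρ * (Aᴴ * A)))
      ≤ sAbs (A * ρ * Aᴴ) + sAbs ((2:ℂ)⁻¹ • (Aᴴ * A * ρ))
        + sAbs ((2:ℂ)⁻¹ • (ρ * (Aᴴ * A))) := by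
    refine (sAbs_sub_le _ _).trans ?_
    have := sAbs_sub_le (A * ρ * Aᴴ) ((2:ℂ)⁻¹ • (Aᴴ * A * ρ))
    linarith
  have key : sAbs A * sAbs ρ * sAbs A ≤ (n:ℝ)^2 * (sAbs A)^2 := by nlinarith
  nlinarith

lemma S_bddAbove {r : ℕ} (L : Fin r → Matrix (Fin n) (Fin n) ℂ)
    (D : Matrix (Fin n) (Fin n) ℂ → Matrix (Fin n) (Fin n) ℂ)
    (hD : ∀ ρ, D ρ = ∑ i,
      (L i * ρ * (L i)ᴴ - (2 : ℂ)⁻¹ • ((L i)ᴴ * L i * ρ)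
        - (2 : ℂ)⁻¹ • (ρ * ((L i)ᴴ * L i)))) :
    BddAbove {x : ℝ | ∃ ρ : Matrix (Fin n) (Fin n) ℂ,
      ρ.PosSemidef ∧ ρ.trace = 1 ∧ x = -2 * ((ρ * D ρ).trace).re} := by
  refine ⟨2 * ((n:ℝ)^2 * ∑ i, 3 * ((n:ℝ)^2 * (sAbs (L i))^2)), ?_⟩
  rintro x ⟨ρ, hρ, htrρ, rfl⟩
  have hR := sAbs_density_le hρ htrρ
  have h1 : -2 * ((ρ * D ρ).trace).re ≤ 2 * norm ((ρ * D ρ).trace) := by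
    have := Complex.abs_re_le_norm ((ρ * D ρ).trace)
    have := neg_abs_le (((ρ * D ρ).trace).re)
    linarith
  have h2 : norm ((ρ * D ρ).trace) ≤ sAbs ρ * sAbs (D ρ) :=
    (abs_trace_le _).trans (sAbs_mul_le _ _)
  have h3 : sAbs (D ρ) ≤ ∑ i, 3 * ((n:ℝ)^2 * (sAbs (L i))^2) := by
    rw [hD]
    refine (sAbs_sum_le _).trans ?_
    exact Finset.sum_le_sum fun i _ => sAbs_term_le (L i) ρ hR
  have h4 : 0 ≤ sAbs (D ρ) := sAbs_nonneg _
  have h5 : 0 ≤ sAbs ρ := sAbs_nonneg _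
  have h6 : sAbs ρ * sAbs (D ρ) ≤ (n:ℝ)^2 * ∑ i, 3 * ((n:ℝ)^2 * (sAbs (L i))^2) := by
    calc sAbs ρ * sAbs (D ρ) ≤ (n:ℝ)^2 * sAbs (D ρ) :=
          mul_le_mul_of_nonneg_right hR h4
      _ ≤ (n:ℝ)^2 * ∑ i, 3 * ((n:ℝ)^2 * (sAbs (L i))^2) :=
          mul_le_mul_of_nonneg_left h3 (by positivity)
  linarith

end PurityAux

open PurityAux

/-- Purity decay rate vanishes only for a vanishing dissipator:
`Γ = sup {−2 Re tr(ρ D(ρ)) : ρ density matrix}` satisfies `Γ ≥ 0`, and `Γ = 0`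
iff all the (traceless) Lindblad operators vanish. -/
theorem purity_decay_rate_zero_iff_dissipator_zero
    {n r : ℕ} (L : Fin r → Matrix (Fin n) (Fin n) ℂ)
    (htr : ∀ i, (L i).trace = 0)
    (D : Matrix (Fin n) (Fin n) ℂ → Matrix (Fin n) (Fin n) ℂ)
    (hD : ∀ ρ, D ρ = ∑ i,
      (L i * ρ * (L i)ᴴ - (2 : ℂ)⁻¹ • ((L i)ᴴ * L i * ρ)
        - (2 : ℂ)⁻¹ • (ρ * ((L i)ᴴ * L i))))
    (Γ : ℝ)
    (hΓ : Γ = sSup {x : ℝ | ∃ ρ : Matrix (Fin n) (Fin n) ℂ,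
      ρ.PosSemidef ∧ ρ.trace = 1 ∧ x = -2 * ((ρ * D ρ).trace).re}) :
    0 ≤ Γ ∧ (Γ = 0 ↔ ∀ i, L i = 0) := by
  classical
  rcases Nat.eq_zero_or_pos n with hn | hn
  · -- n = 0 : no density matrices, everything trivial
    subst hn
    have hL0 : ∀ i, L i = 0 := fun i => by
      ext a b; exact a.elim0
    have hSempty : {x : ℝ | ∃ ρ : Matrix (Fin 0) (Fin 0) ℂ,
        ρ.PosSemidef ∧ ρ.trace = 1 ∧ x = -2 * ((ρ * D ρ).trace).re} = ∅ := by
      ext x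
      simp only [Set.mem_setOf_eq, Set.mem_empty_iff_false, iff_false, not_exists]
      rintro ρ ⟨_, htrρ, _⟩
      have h0 : ρ.trace = 0 := by simp [Matrix.trace]
      rw [h0] at htrρ
      exact one_ne_zero htrρ.symm
    rw [hSempty, Real.sSup_empty] at hΓ
    subst hΓ
    exact ⟨le_refl 0, ⟨fun _ => hL0, fun _ => rfl⟩⟩
  · -- n > 0
    set e : Fin n → Fin n → ℂ := fun j => Pi.single j 1 with he
    have heunit : ∀ j, star (e j) ⬝ᵥ e j = 1 := by
      intro j
      rw [he, star_single, single_dotProduct]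
      simp
    set j0 : Fin n := ⟨0, hn⟩
    have hmem := fun (ψ : Fin n → ℂ) hψ => mem_S L D hD ψ hψ
    have hBdd := S_bddAbove L D hD
    have hval_nonneg : ∀ ψ : Fin n → ℂ, star ψ ⬝ᵥ ψ = 1 →
        (0:ℝ) ≤ 2 * ∑ i, ((star (L i *ᵥ ψ) ⬝ᵥ (L i *ᵥ ψ)).re
          - Complex.normSq (star ψ ⬝ᵥ (L i *ᵥ ψ))) := fun ψ hψ =>
      mul_nonneg (by norm_num)
        (Finset.sum_nonneg fun i _ => summand_nonneg (L i) ψ hψ)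
    have hΓnonneg : 0 ≤ Γ := by
      rw [hΓ]
      exact Real.sSup_nonneg' ⟨_, hmem (e j0) (heunit j0), hval_nonneg (e j0) (heunit j0)⟩
    refine ⟨hΓnonneg, ⟨fun hzero i => ?_, fun hL => ?_⟩⟩
    · -- Γ = 0 → L i = 0
      have hle : ∀ ψ : Fin n → ℂ, star ψ ⬝ᵥ ψ = 1 →
          2 * ∑ k, ((star (L k *ᵥ ψ) ⬝ᵥ (L k *ᵥ ψ)).re
            - Complex.normSq (star ψ ⬝ᵥ (L k *ᵥ ψ))) ≤ 0 := by
        intro ψ hψ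
        have h := le_csSup hBdd (hmem ψ hψ)
        rw [← hΓ, hzero] at h
        exact h
      have hsum0 : ∀ ψ : Fin n → ℂ, star ψ ⬝ᵥ ψ = 1 → ∀ k : Fin r,
          (star (L k *ᵥ ψ) ⬝ᵥ (L k *ᵥ ψ)).re
            - Complex.normSq (star ψ ⬝ᵥ (L k *ᵥ ψ)) = 0 := by
        intro ψ hψ
        have h1 := hle ψ hψ
        have h2 : ∑ k, ((star (L k *ᵥ ψ) ⬝ᵥ (L k *ᵥ ψ)).re
            - Complex.normSq (star ψ ⬝ᵥ (L k *ᵥ ψ))) = 0 := by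
          have h3 := Finset.sum_nonneg
            (fun k (_ : k ∈ Finset.univ) => summand_nonneg (L k) ψ hψ)
          linarith
        intro k
        exact (Finset.sum_eq_zero_iff_of_nonneg
          (fun k _ => summand_nonneg (L k) ψ hψ)).mp h2 k (Finset.mem_univ k)
      have heig : ∀ ψ : Fin n → ℂ, star ψ ⬝ᵥ ψ = 1 →
          L i *ᵥ ψ = (star ψ ⬝ᵥ (L i *ᵥ ψ)) • ψ := fun ψ hψ =>
        summand_zero_eigen (L i) ψ hψ (hsum0 ψ hψ i)
      -- columns: L i is diagonal with entries c j
      set c : Fin n → ℂ := fun j => star (e j) ⬝ᵥ (L i *ᵥ e j) with hc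
      have hcol : ∀ j a : Fin n, L i a j = c j * e j a := by
        intro j a
        have h := congrFun (heig (e j) (heunit j)) a
        have h2 : (L i *ᵥ e j) a = L i a j := by
          rw [he]
          simp [Matrix.mulVec_single]
        rw [h2] at h
        simpa using h
      have hoff : ∀ a j : Fin n, a ≠ j → L i a j = 0 := by
        intro a j hne
        rw [hcol j a, he]
        simp [Pi.single_apply, hne]
      have hdiagval : ∀ j, L i j j = c j := by
        intro j
        rw [hcol j j, he]
        simp
      have hceq : ∀ j k : Fin n, c j = c k := by
        intro j k
        rcases eq_or_ne j k with rfl | hjk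
        · rfl
        set b : ℂ := ((Real.sqrt 2 : ℝ) : ℂ)⁻¹ with hb
        have hbne : b ≠ 0 := by
          rw [hb]
          simp [Real.sqrt_eq_zero']
        have hbstar : star b = b := by
          rw [hb, star_inv₀, Complex.star_def, Complex.conj_ofReal]
        have hb2 : b * b * 2 = 1 := by
          rw [hb, ← mul_inv]
          norm_cast
          rw [Real.mul_self_sqrt (by norm_num)]
          norm_num
        set ψ : Fin n → ℂ := b • (e j + e k) with hψdef
        have hdot : ∀ a m : Fin n, star (e a) ⬝ᵥ e m = if m = a then 1 else 0 := by
          intro a m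
          rw [he, star_single, single_dotProduct]
          rcases eq_or_ne a m with rfl | h
          · simp
          · simp [Pi.single_apply, h, Ne.symm h]
        have hψunit : star ψ ⬝ᵥ ψ = 1 := by
          rw [hψdef, star_smul, smul_dotProduct, dotProduct_smul,
            hbstar, star_add, add_dotProduct, dotProduct_add,
            dotProduct_add]
          rw [hdot j j, hdot k j, hdot j k, hdot k k]
          rw [if_pos rfl, if_pos rfl, if_neg hjk, if_neg (Ne.symm hjk)]
          rw [smul_eq_mul, smul_eq_mul]
          linear_combination hb2
        have h := heig ψ hψunit
        set μ : ℂ := star ψ ⬝ᵥ (L i *ᵥ ψ) with hμ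
        have hLψ : L i *ᵥ ψ = b • (fun a => L i a j * 1) + b • (fun a => L i a k * 1) := by
          rw [hψdef, Matrix.mulVec_smul, Matrix.mulVec_add, he,
            Matrix.mulVec_single, Matrix.mulVec_single, smul_add]
          rfl
        have hcomp : ∀ a : Fin n, b * (L i a j + L i a k) = μ * (b * (e j a + e k a)) := by
          intro a
          have h2 := congrFun h a
          rw [hLψ] at h2
          simp only [Pi.add_apply, Pi.smul_apply, smul_eq_mul, mul_one, hψdef] at h2 ⊢
          linear_combination h2
        have hej : e j j = 1 ∧ e k j = 0 ∧ e j k = 0 ∧ e k k = 1 := by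
          refine ⟨?_, ?_, ?_, ?_⟩ <;>
            simp [he, Pi.single_apply, hjk, Ne.symm hjk]
        have hcj : c j = μ := by
          have h2 := hcomp j
          rw [hdiagval j, hoff j k hjk, hej.1, hej.2.1] at h2
          have h3 : b * c j = b * μ := by linear_combination h2
          exact mul_left_cancel₀ hbne h3
        have hck : c k = μ := by
          have h2 := hcomp k
          rw [hdiagval k, hoff k j (Ne.symm hjk), hej.2.2.1, hej.2.2.2] at h2
          have h3 : b * c k = b * μ := by linear_combination h2
          exact mul_left_cancel₀ hbne h3
        rw [hcj, hck]
      have htrace_eq : (L i).trace = (n:ℂ) * c j0 := by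
        rw [Matrix.trace]
        calc ∑ j, (L i).diag j = ∑ j : Fin n, c j0 := by
              refine Finset.sum_congr rfl fun j _ => ?_
              rw [Matrix.diag_apply, hdiagval j, hceq j j0]
          _ = (n:ℂ) * c j0 := by
              rw [Finset.sum_const, Finset.card_univ, Fintype.card_fin, nsmul_eq_mul]
      have hc0 : c j0 = 0 := by
        have h1 := htr i
        rw [htrace_eq] at h1
        have hne : (n:ℂ) ≠ 0 := by
          exact_mod_cast Nat.pos_iff_ne_zero.mp hn
        exact (mul_eq_zero.mp h1).resolve_left hne
      ext a b
      rcases eq_or_ne a b with rfl | hab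
      · rw [hdiagval a, hceq a j0, hc0]
        rfl
      · rw [hoff a b (by exact hab)]
        rfl
    · -- all L i = 0 → Γ = 0
      have hSsingle : {x : ℝ | ∃ ρ : Matrix (Fin n) (Fin n) ℂ,
          ρ.PosSemidef ∧ ρ.trace = 1 ∧ x = -2 * ((ρ * D ρ).trace).re} = {0} := by
        ext x
        simp only [Set.mem_setOf_eq, Set.mem_singleton_iff]
        constructor
        · rintro ⟨ρ, hρ, htrρ, rfl⟩
          have hD0 : D ρ = 0 := by rw [hD]; simp [hL]
          rw [hD0]
          simp
        · rintro rfl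
          refine ⟨pure' (e j0), pure_posSemidef _, by rw [pure_trace, heunit j0], ?_⟩
          have hD0 : D (pure' (e j0)) = 0 := by rw [hD]; simp [hL]
          rw [hD0]
          simp
      rw [hΓ, hSsingle, csSup_singleton]
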